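/- Let A₁, A₂, B₁, B₂ be Hermitian operators on finite-dimensional Hilbert spaces H_A, H_B respectively, each with operator norm at most 1, and let ρ be a density operator on H_A ⊗ H_B. Then |tr(ρ · (A₁⊗(B₁+B₂) + A₂⊗(B₁−B₂)))| ≤ 2√2 (Tsirelson's bound). -/

import Mathlib

open Matrix Kronecker ComplexOrder

lemma trace_mul_self_conj_nonneg {k : Type*} [Fintype k] (D : Matrix k k ℂ) :
    0 ≤ (Dᴴ * D).trace := by
  rw [Matrix.trace]
  refine Finset.sum_nonneg fun j _ => ?_
  simp only [Matrix.diag_apply, Matrix.mul_apply, Matrix.conjTranspose_apply]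
  exact Finset.sum_nonneg fun i _ => star_mul_self_nonneg _

lemma trace_psd_mul_nonneg {k : Type*} [Fintype k] {P Q : Matrix k k ℂ}
    (hP : P.PosSemidef) (hQ : Q.PosSemidef) : 0 ≤ (P * Q).trace := by
  obtain ⟨C, rfl⟩ : ∃ C : Matrix _ _ ℂ, P = Cᴴ * C := by
    classical
    open scoped MatrixOrder in exact CStarAlgebra.nonneg_iff_eq_star_mul_self.mp hP.nonneg
  obtain ⟨D, rfl⟩ : ∃ D : Matrix _ _ ℂ, Q = Dᴴ * D := by
    classical
    open scoped MatrixOrder in exact CStarAlgebra.nonneg_iff_eq_star_mul_self.mp hQ.nonneg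
  have h : (Cᴴ * C * (Dᴴ * D)).trace = ((C * Dᴴ)ᴴ * (C * Dᴴ)).trace := by
    rw [Matrix.conjTranspose_mul, Matrix.conjTranspose_conjTranspose,
      Matrix.trace_mul_comm (D * Cᴴ)]
    simp only [Matrix.mul_assoc]
    rw [Matrix.trace_mul_comm Cᴴ]
    simp only [Matrix.mul_assoc]
  rw [h]
  exact trace_mul_self_conj_nonneg _

lemma kron_conjTranspose {a b : ℕ} (A : Matrix (Fin a) (Fin a) ℂ) (B : Matrix (Fin b) (Fin b) ℂ) :
    (A ⊗ₖ B)ᴴ = Aᴴ ⊗ₖ Bᴴ := by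
  ext ⟨i, j⟩ ⟨k, l⟩
  simp [Matrix.conjTranspose_apply, Matrix.kroneckerMap_apply, mul_comm]

lemma kron_psd {a b : ℕ} {A : Matrix (Fin a) (Fin a) ℂ} {B : Matrix (Fin b) (Fin b) ℂ}
    (hA : A.PosSemidef) (hB : B.PosSemidef) : (A ⊗ₖ B).PosSemidef := by
  obtain ⟨C, rfl⟩ : ∃ C : Matrix _ _ ℂ, A = Cᴴ * C := by
    classical
    open scoped MatrixOrder in exact CStarAlgebra.nonneg_iff_eq_star_mul_self.mp hA.nonneg
  obtain ⟨D, rfl⟩ : ∃ D : Matrix _ _ ℂ, B = Dᴴ * D := by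
    classical
    open scoped MatrixOrder in exact CStarAlgebra.nonneg_iff_eq_star_mul_self.mp hB.nonneg
  rw [Matrix.mul_kronecker_mul, ← kron_conjTranspose]
  exact Matrix.posSemidef_conjTranspose_mul_self _

lemma sub_kron {a b : ℕ} (P Q : Matrix (Fin a) (Fin a) ℂ) (R : Matrix (Fin b) (Fin b) ℂ) :
    (P - Q) ⊗ₖ R = P ⊗ₖ R - Q ⊗ₖ R := by
  ext ⟨i, j⟩ ⟨k, l⟩
  simp [Matrix.kroneckerMap_apply, sub_mul]

lemma neg_kron {a b : ℕ} (P : Matrix (Fin a) (Fin a) ℂ) (R : Matrix (Fin b) (Fin b) ℂ) :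
    (-P) ⊗ₖ R = -(P ⊗ₖ R) := by
  ext ⟨i, j⟩ ⟨k, l⟩
  simp [Matrix.kroneckerMap_apply]

lemma kron_sub {a b : ℕ} (R : Matrix (Fin a) (Fin a) ℂ) (P Q : Matrix (Fin b) (Fin b) ℂ) :
    R ⊗ₖ (P - Q) = R ⊗ₖ P - R ⊗ₖ Q := by
  ext ⟨i, j⟩ ⟨k, l⟩
  simp [Matrix.kroneckerMap_apply, mul_sub]

lemma sos {k : Type*} [Fintype k] [DecidableEq k] (s : ℂ) (hs : s * s = 2)
    (a b u v : Matrix k k ℂ) (hau : a*u = u*a) (hav : a*v = v*a)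
    (hbu : b*u = u*b) (hbv : b*v = v*b) :
    (s•a - (u+v)) * (s•a - (u+v)) + (s•b - (u-v)) * (s•b - (u-v))
      + (2:ℂ)•(1 - a*a) + (2:ℂ)•(1 - b*b) + (2:ℂ)•(1 - u*u) + (2:ℂ)•(1 - v*v)
    = (8:ℂ)•1 - (2*s) • (a*(u+v) + b*(u-v)) := by
  simp only [sub_mul, mul_sub, add_mul, mul_add, smul_mul_assoc, mul_smul_comm,
    smul_smul, hs, smul_sub, smul_add, hau, hav, hbu, hbv]
  module

lemma half_bound {m n : ℕ}
    (A₁ A₂ : Matrix (Fin m) (Fin m) ℂ) (B₁ B₂ : Matrix (Fin n) (Fin n) ℂ)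
    (hA₁ : A₁.IsHermitian) (hA₂ : A₂.IsHermitian)
    (hB₁ : B₁.IsHermitian) (hB₂ : B₂.IsHermitian)
    (hA₁n : (1 - A₁ * A₁).PosSemidef) (hA₂n : (1 - A₂ * A₂).PosSemidef)
    (hB₁n : (1 - B₁ * B₁).PosSemidef) (hB₂n : (1 - B₂ * B₂).PosSemidef)
    (ρ : Matrix (Fin m × Fin n) (Fin m × Fin n) ℂ)
    (hρ : ρ.PosSemidef) (hρtr : ρ.trace = 1) :
    ((ρ * (A₁ ⊗ₖ (B₁ + B₂) + A₂ ⊗ₖ (B₁ - B₂))).trace).re ≤ 2 * Real.sqrt 2 := by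
  set s : ℂ := ((Real.sqrt 2 : ℝ) : ℂ) with hs_def
  have hs : s * s = 2 := by
    rw [hs_def, ← Complex.ofReal_mul, Real.mul_self_sqrt (by norm_num : (0:ℝ) ≤ 2)]
    norm_num
  set a := A₁ ⊗ₖ (1 : Matrix (Fin n) (Fin n) ℂ) with ha_def
  set b := A₂ ⊗ₖ (1 : Matrix (Fin n) (Fin n) ℂ) with hb_def
  set u := (1 : Matrix (Fin m) (Fin m) ℂ) ⊗ₖ B₁ with hu_def
  set v := (1 : Matrix (Fin m) (Fin m) ℂ) ⊗ₖ B₂ with hv_def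
  have hau : a * u = u * a := by
    rw [ha_def, hu_def, ← Matrix.mul_kronecker_mul, ← Matrix.mul_kronecker_mul]
    simp
  have hav : a * v = v * a := by
    rw [ha_def, hv_def, ← Matrix.mul_kronecker_mul, ← Matrix.mul_kronecker_mul]
    simp
  have hbu : b * u = u * b := by
    rw [hb_def, hu_def, ← Matrix.mul_kronecker_mul, ← Matrix.mul_kronecker_mul]
    simp
  have hbv : b * v = v * b := by
    rw [hb_def, hv_def, ← Matrix.mul_kronecker_mul, ← Matrix.mul_kronecker_mul]
    simp
  have h𝓑 : A₁ ⊗ₖ (B₁ + B₂) + A₂ ⊗ₖ (B₁ - B₂) = a * (u + v) + b * (u - v) := by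
    rw [ha_def, hb_def, hu_def, hv_def]
    rw [← Matrix.kronecker_add, ← kron_sub, ← Matrix.mul_kronecker_mul,
      ← Matrix.mul_kronecker_mul]
    simp
  -- Hermiticity of the square-root factors
  have hstars : star s = s := by rw [hs_def]; exact Complex.conj_ofReal _
  have haH : aᴴ = a := by rw [ha_def, kron_conjTranspose, hA₁.eq, Matrix.conjTranspose_one]
  have hbH : bᴴ = b := by rw [hb_def, kron_conjTranspose, hA₂.eq, Matrix.conjTranspose_one]
  have huH : uᴴ = u := by rw [hu_def, kron_conjTranspose, hB₁.eq, Matrix.conjTranspose_one]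
  have hvH : vᴴ = v := by rw [hv_def, kron_conjTranspose, hB₂.eq, Matrix.conjTranspose_one]
  have hX : ((s•a - (u+v)) * (s•a - (u+v))).PosSemidef := by
    have hXh : (s•a - (u+v))ᴴ = s•a - (u+v) := by
      simp [Matrix.conjTranspose_smul, hstars, haH, huH, hvH]
    have := Matrix.posSemidef_conjTranspose_mul_self (s•a - (u+v))
    rwa [hXh] at this
  have hY : ((s•b - (u-v)) * (s•b - (u-v))).PosSemidef := by
    have hYh : (s•b - (u-v))ᴴ = s•b - (u-v) := by
      simp [Matrix.conjTranspose_smul, hstars, hbH, huH, hvH]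
    have := Matrix.posSemidef_conjTranspose_mul_self (s•b - (u-v))
    rwa [hYh] at this
  have hPa : (1 - a * a).PosSemidef := by
    have : (1 : Matrix (Fin m × Fin n) (Fin m × Fin n) ℂ) - a * a
        = (1 - A₁ * A₁) ⊗ₖ (1 : Matrix (Fin n) (Fin n) ℂ) := by
      rw [ha_def, ← Matrix.mul_kronecker_mul, sub_kron, Matrix.one_kronecker_one]
      simp
    rw [this]; exact kron_psd hA₁n Matrix.PosSemidef.one
  have hPb : (1 - b * b).PosSemidef := by
    have : (1 : Matrix (Fin m × Fin n) (Fin m × Fin n) ℂ) - b * b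
        = (1 - A₂ * A₂) ⊗ₖ (1 : Matrix (Fin n) (Fin n) ℂ) := by
      rw [hb_def, ← Matrix.mul_kronecker_mul, sub_kron, Matrix.one_kronecker_one]
      simp
    rw [this]; exact kron_psd hA₂n Matrix.PosSemidef.one
  have hPu : (1 - u * u).PosSemidef := by
    have : (1 : Matrix (Fin m × Fin n) (Fin m × Fin n) ℂ) - u * u
        = (1 : Matrix (Fin m) (Fin m) ℂ) ⊗ₖ (1 - B₁ * B₁) := by
      rw [hu_def, ← Matrix.mul_kronecker_mul, kron_sub, Matrix.one_kronecker_one]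
      simp
    rw [this]; exact kron_psd Matrix.PosSemidef.one hB₁n
  have hPv : (1 - v * v).PosSemidef := by
    have : (1 : Matrix (Fin m × Fin n) (Fin m × Fin n) ℂ) - v * v
        = (1 : Matrix (Fin m) (Fin m) ℂ) ⊗ₖ (1 - B₂ * B₂) := by
      rw [hv_def, ← Matrix.mul_kronecker_mul, kron_sub, Matrix.one_kronecker_one]
      simp
    rw [this]; exact kron_psd Matrix.PosSemidef.one hB₂n
  have h2 : (0:ℂ) ≤ 2 := by
    have := Complex.real_le_real.mpr (by norm_num : (0:ℝ) ≤ 2)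
    simpa using this
  have hsos := sos s hs a b u v hau hav hbu hbv
  have nonneg : 0 ≤ (ρ * ((8:ℂ)•1 - (2*s) • (a*(u+v) + b*(u-v)))).trace := by
    rw [← hsos]
    simp only [mul_add, Matrix.trace_add, mul_smul_comm, Matrix.trace_smul, smul_eq_mul]
    have t1 := trace_psd_mul_nonneg hρ hX
    have t2 := trace_psd_mul_nonneg hρ hY
    have t3 := trace_psd_mul_nonneg hρ hPa
    have t4 := trace_psd_mul_nonneg hρ hPb
    have t5 := trace_psd_mul_nonneg hρ hPu
    have t6 := trace_psd_mul_nonneg hρ hPv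
    have := add_nonneg (add_nonneg (add_nonneg (add_nonneg (add_nonneg t1 t2)
      (mul_nonneg h2 t3)) (mul_nonneg h2 t4)) (mul_nonneg h2 t5)) (mul_nonneg h2 t6)
    convert this using 1
  set t := (ρ * (a * (u + v) + b * (u - v))).trace with ht_def
  have key : 0 ≤ 8 - 2 * s * t := by
    have expand : (ρ * ((8:ℂ)•1 - (2*s) • (a*(u+v) + b*(u-v)))).trace = 8 - 2*s*t := by
      rw [mul_sub, Matrix.trace_sub, mul_smul_comm, mul_smul_comm, mul_one,
        Matrix.trace_smul, Matrix.trace_smul, hρtr, ← ht_def]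
      simp [smul_eq_mul]
    rw [expand] at nonneg
    exact nonneg
  have hre : 0 ≤ 8 - 2 * Real.sqrt 2 * t.re := by
    have := (Complex.le_def.mp key).1
    simpa [hs_def, Complex.mul_re, Complex.ofReal_re, Complex.ofReal_im] using this
  rw [h𝓑]
  have hsq : Real.sqrt 2 * Real.sqrt 2 = 2 := Real.mul_self_sqrt (by norm_num)
  have hpos : 0 < Real.sqrt 2 := Real.sqrt_pos.mpr (by norm_num)
  nlinarith [hre, hsq, hpos]

/-- Tsirelson's bound for the CHSH operator. -/
theorem tsirelson_bound {m n : ℕ}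
    (A₁ A₂ : Matrix (Fin m) (Fin m) ℂ) (B₁ B₂ : Matrix (Fin n) (Fin n) ℂ)
    (hA₁ : A₁.IsHermitian) (hA₂ : A₂.IsHermitian)
    (hB₁ : B₁.IsHermitian) (hB₂ : B₂.IsHermitian)
    (hA₁n : (1 - A₁ * A₁).PosSemidef) (hA₂n : (1 - A₂ * A₂).PosSemidef)
    (hB₁n : (1 - B₁ * B₁).PosSemidef) (hB₂n : (1 - B₂ * B₂).PosSemidef)
    (ρ : Matrix (Fin m × Fin n) (Fin m × Fin n) ℂ)
    (hρ : ρ.PosSemidef) (hρtr : ρ.trace = 1) :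
    ‖(ρ * (A₁ ⊗ₖ (B₁ + B₂) + A₂ ⊗ₖ (B₁ - B₂))).trace‖ ≤ 2 * Real.sqrt 2 := by
  set 𝓑 := A₁ ⊗ₖ (B₁ + B₂) + A₂ ⊗ₖ (B₁ - B₂) with h𝓑def
  set t := (ρ * 𝓑).trace with ht_def
  have upper : t.re ≤ 2 * Real.sqrt 2 :=
    half_bound A₁ A₂ B₁ B₂ hA₁ hA₂ hB₁ hB₂ hA₁n hA₂n hB₁n hB₂n ρ hρ hρtr
  have lower : -(2 * Real.sqrt 2) ≤ t.re := by
    have hA₁' : (-A₁).IsHermitian := hA₁.neg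
    have hA₂' : (-A₂).IsHermitian := hA₂.neg
    have hA₁n' : (1 - (-A₁) * (-A₁)).PosSemidef := by rwa [neg_mul_neg]
    have hA₂n' : (1 - (-A₂) * (-A₂)).PosSemidef := by rwa [neg_mul_neg]
    have h := half_bound (-A₁) (-A₂) B₁ B₂ hA₁' hA₂' hB₁ hB₂ hA₁n' hA₂n' hB₁n hB₂n ρ hρ hρtr
    have hneg : (-A₁) ⊗ₖ (B₁ + B₂) + (-A₂) ⊗ₖ (B₁ - B₂) = -𝓑 := by
      rw [h𝓑def, neg_kron, neg_kron]; abel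
    rw [hneg, mul_neg, Matrix.trace_neg, ← ht_def] at h
    simp only [Complex.neg_re] at h
    linarith
  have hHerm : 𝓑ᴴ = 𝓑 := by
    rw [h𝓑def, Matrix.conjTranspose_add, kron_conjTranspose, kron_conjTranspose,
      Matrix.conjTranspose_add, Matrix.conjTranspose_sub, hA₁.eq, hA₂.eq, hB₁.eq, hB₂.eq]
  have hreal : (starRingEnd ℂ) t = t := by
    rw [ht_def, ← Complex.star_def, ← Matrix.trace_conjTranspose, Matrix.conjTranspose_mul,
      hHerm, hρ.1.eq, Matrix.trace_mul_comm]
  have him : t.im = 0 := Complex.conj_eq_iff_im.mp hreal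
  have : t = ((t.re : ℝ) : ℂ) := Complex.ext rfl (by simp [him])
  rw [this, Complex.norm_real, Real.norm_eq_abs]
  exact abs_le.mpr ⟨lower, upper⟩
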